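/- In the free metabelian associative algebra F_d, for every element f of the commutator ideal F_d' and all 1 ≤ i,j ≤ d the following identities hold: (1) x_i(x_j f) = x_j(x_i f); (2) [[f,x_i],x_j] = [[f,x_j],x_i]; (3) [x_i f, x_j] = x_i [f,x_j]. Consequently the prescriptions f·u_i = x_i f and f·v_i = [f,x_i] give a well-defined module structure on F_d' over the polynomial algebra K[U_d,V_d] = K[u_1,…,u_d,v_1,…,v_d]. -/

import Mathlib

noncomputable section

/-- The metabelian relation on the free associative algebra:
products of two commutators are identified with zero. -/
def MetabRel (K : Type*) [CommRing K] (d : ℕ) (p q : FreeAlgebra K (Fin d)) : Prop :=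
  q = 0 ∧ ∃ a b c e : FreeAlgebra K (Fin d), p = (a * b - b * a) * (c * e - e * c)

/-- The free metabelian associative algebra `F_d = A_d/(A_d')²`. -/
abbrev FreeMetab (K : Type*) [CommRing K] (d : ℕ) := RingQuot (MetabRel K d)

/-- The free generators `x_i` of `F_d`. -/
def xg (K : Type*) [CommRing K] (d : ℕ) (i : Fin d) : FreeMetab K d :=
  RingQuot.mkAlgHom K (MetabRel K d) (FreeAlgebra.ι K i)

/-- The commutator ideal `F_d'`: the two-sided ideal generated by all commutators. -/
def commIdeal (K : Type*) [CommRing K] (d : ℕ) : Ideal (FreeMetab K d) :=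
  Ideal.span {z | ∃ a f g b : FreeMetab K d, z = a * (f * g - g * f) * b}

/-- `K[U_d,V_d]`. -/
abbrev PolyUV (K : Type*) [CommRing K] (d : ℕ) := MvPolynomial (Fin d ⊕ Fin d) K

def uP (K : Type*) [CommRing K] (d : ℕ) (i : Fin d) : PolyUV K d := MvPolynomial.X (Sum.inl i)
def vP (K : Type*) [CommRing K] (d : ℕ) (i : Fin d) : PolyUV K d := MvPolynomial.X (Sum.inr i)

/-- Action of a monomial of `K[U_d,V_d]` on `F_d`, implementing
`f·u_i = x_i f` and `f·v_i = [f,x_i]` (on the commutator ideal all the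
individual operators commute, so the fixed order of composition is immaterial). -/
def monAct (K : Type*) [CommRing K] (d : ℕ) (m : (Fin d ⊕ Fin d) →₀ ℕ) :
    Module.End K (FreeMetab K d) :=
  (List.ofFn fun i : Fin d =>
      (LinearMap.mulLeft K (xg K d i) : Module.End K (FreeMetab K d)) ^ m (Sum.inl i)).prod *
  (List.ofFn fun i : Fin d =>
      (LinearMap.mulRight K (xg K d i) - LinearMap.mulLeft K (xg K d i) :
        Module.End K (FreeMetab K d)) ^ m (Sum.inr i)).prod

/-- The action of `K[U_d,V_d]` on the commutator ideal of `F_d`. -/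
def act (K : Type*) [CommRing K] (d : ℕ) (p : PolyUV K d) (w : FreeMetab K d) : FreeMetab K d :=
  ∑ m ∈ p.support, p.coeff m • (monAct K d m w)

/-- The commutator ideal of `F_d` as a `K`-subspace. -/
def commSub (K : Type*) [CommRing K] (d : ℕ) : Submodule K (FreeMetab K d) :=
  (commIdeal K d).restrictScalars K

namespace MetabAux

variable (K : Type*) [CommRing K] (d : ℕ)

/-- In `F_d`, the product of any two commutators is zero. -/
lemma comm_mul_comm (a b c e : FreeMetab K d) :
    (a * b - b * a) * (c * e - e * c) = 0 := by
  obtain ⟨a', rfl⟩ := RingQuot.mkAlgHom_surjective K (MetabRel K d) a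
  obtain ⟨b', rfl⟩ := RingQuot.mkAlgHom_surjective K (MetabRel K d) b
  obtain ⟨c', rfl⟩ := RingQuot.mkAlgHom_surjective K (MetabRel K d) c
  obtain ⟨e', rfl⟩ := RingQuot.mkAlgHom_surjective K (MetabRel K d) e
  have h := RingQuot.mkAlgHom_rel K
    (show MetabRel K d ((a' * b' - b' * a') * (c' * e' - e' * c')) 0 from
      ⟨rfl, a', b', c', e', rfl⟩)
  simpa only [map_mul, map_sub, map_zero] using h

/-- A commutator times anything times a commutator is zero. -/
lemma comm_mul_any_comm (u v z g h : FreeMetab K d) :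
    (u * v - v * u) * (z * (g * h - h * g)) = 0 := by
  have h1 := comm_mul_comm K d u v (z * g) h
  have h2 := comm_mul_comm K d u v z h
  have key : (u * v - v * u) * (z * (g * h - h * g))
      = (u * v - v * u) * ((z * g) * h - h * (z * g))
        - ((u * v - v * u) * (z * h - h * z)) * g := by (simp only [mul_sub, sub_mul, mul_assoc]; try abel)
  rw [key, h1, h2, zero_mul, sub_zero]

/-- Anything times a commutator times a commutator is zero. -/
lemma any_comm_mul_comm (g h z u v : FreeMetab K d) :
    ((g * h - h * g) * z) * (u * v - v * u) = 0 := by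
  have h1 := comm_mul_comm K d g (h * z) u v
  have h2 := comm_mul_comm K d g z u v
  have key : ((g * h - h * g) * z) * (u * v - v * u)
      = (g * (h * z) - (h * z) * g) * (u * v - v * u)
        - h * ((g * z - z * g) * (u * v - v * u)) := by (simp only [mul_sub, sub_mul, mul_assoc]; try abel)
  rw [key, h1, h2, mul_zero, sub_zero]

/-- A commutator annihilates the commutator ideal from the left. -/
lemma comm_mul_mem (u v : FreeMetab K d) {f : FreeMetab K d} (hf : f ∈ commIdeal K d) :
    (u * v - v * u) * f = 0 := by
  have main : ∀ y : FreeMetab K d, (u * v - v * u) * (y * f) = 0 := by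
    refine Submodule.span_induction
      (p := fun x _ => ∀ y : FreeMetab K d, (u * v - v * u) * (y * x) = 0)
      ?_ ?_ ?_ ?_ hf
    · rintro x ⟨a, g, h, b, rfl⟩ y
      have key : (u * v - v * u) * (y * (a * (g * h - h * g) * b))
          = ((u * v - v * u) * ((y * a) * (g * h - h * g))) * b := by (simp only [mul_sub, sub_mul, mul_assoc]; try abel)
      rw [key, comm_mul_any_comm, zero_mul]
    · intro y; simp
    · intro x₁ x₂ _ _ h₁ h₂ y
      have : y * (x₁ + x₂) = y * x₁ + y * x₂ := mul_add y x₁ x₂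
      rw [this, mul_add, h₁, h₂, add_zero]
    · intro r x _ hx y
      have : y * (r • x) = (y * r) * x := by rw [smul_eq_mul, mul_assoc]
      rw [this, hx]
  have := main 1
  rwa [one_mul] at this

/-- The commutator ideal is annihilated by commutators from the right. -/
lemma mem_mul_comm (u v : FreeMetab K d) {f : FreeMetab K d} (hf : f ∈ commIdeal K d) :
    f * (u * v - v * u) = 0 := by
  refine Submodule.span_induction
    (p := fun x _ => x * (u * v - v * u) = 0) ?_ ?_ ?_ ?_ hf
  · rintro x ⟨a, g, h, b, rfl⟩
    have key : (a * (g * h - h * g) * b) * (u * v - v * u)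
        = a * (((g * h - h * g) * b) * (u * v - v * u)) := by (simp only [mul_sub, sub_mul, mul_assoc]; try abel)
    rw [key, any_comm_mul_comm, mul_zero]
  · simp
  · intro x₁ x₂ _ _ h₁ h₂
    rw [add_mul, h₁, h₂, add_zero]
  · intro r x _ hx
    rw [smul_eq_mul, mul_assoc, hx, mul_zero]

variable {K d}

/-- Identity (1). -/
lemma id1 {f : FreeMetab K d} (hf : f ∈ commIdeal K d) (i j : Fin d) :
    xg K d i * (xg K d j * f) = xg K d j * (xg K d i * f) := by
  have h1 := comm_mul_mem K d (xg K d i) (xg K d j) hf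
  have e1 : xg K d i * (xg K d j * f) - xg K d j * (xg K d i * f)
      = (xg K d i * xg K d j - xg K d j * xg K d i) * f := by (simp only [mul_sub, sub_mul, mul_assoc]; try abel)
  rw [h1] at e1
  exact sub_eq_zero.mp e1

/-- Identity (2). -/
lemma id2 {f : FreeMetab K d} (hf : f ∈ commIdeal K d) (i j : Fin d) :
    ((f * xg K d i - xg K d i * f) * xg K d j - xg K d j * (f * xg K d i - xg K d i * f))
      = ((f * xg K d j - xg K d j * f) * xg K d i
          - xg K d i * (f * xg K d j - xg K d j * f)) := by
  have h1 := comm_mul_mem K d (xg K d i) (xg K d j) hf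
  have h2 := mem_mul_comm K d (xg K d i) (xg K d j) hf
  have e1 : ((f * xg K d i - xg K d i * f) * xg K d j - xg K d j * (f * xg K d i - xg K d i * f))
      - ((f * xg K d j - xg K d j * f) * xg K d i - xg K d i * (f * xg K d j - xg K d j * f))
      = f * (xg K d i * xg K d j - xg K d j * xg K d i)
        - (xg K d i * xg K d j - xg K d j * xg K d i) * f := by (simp only [mul_sub, sub_mul, mul_assoc]; try abel)
  rw [h1, h2, sub_zero] at e1
  exact sub_eq_zero.mp e1

/-- Identity (3). -/
lemma id3 {f : FreeMetab K d} (hf : f ∈ commIdeal K d) (i j : Fin d) :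
    ((xg K d i * f) * xg K d j - xg K d j * (xg K d i * f))
      = xg K d i * (f * xg K d j - xg K d j * f) := by
  have h1 := comm_mul_mem K d (xg K d i) (xg K d j) hf
  have e1 : ((xg K d i * f) * xg K d j - xg K d j * (xg K d i * f))
      - xg K d i * (f * xg K d j - xg K d j * f)
      = (xg K d i * xg K d j - xg K d j * xg K d i) * f := by (simp only [mul_sub, sub_mul, mul_assoc]; try abel)
  rw [h1] at e1
  exact sub_eq_zero.mp e1

variable (K d)

lemma L_mem (i : Fin d) : ∀ x ∈ commSub K d, (LinearMap.mulLeft K (xg K d i)) x ∈ commSub K d :=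
  fun x hx => Ideal.mul_mem_left _ _ hx

lemma D_mem (i : Fin d) : ∀ x ∈ commSub K d,
    (LinearMap.mulRight K (xg K d i) - LinearMap.mulLeft K (xg K d i)) x ∈ commSub K d := by
  intro x _
  show x * xg K d i - xg K d i * x ∈ commIdeal K d
  exact Ideal.subset_span ⟨1, x, xg K d i, 1, by simp⟩

/-- The operator `f ↦ x_i f` on the commutator ideal. -/
def Lop (i : Fin d) : Module.End K (commSub K d) :=
  (LinearMap.mulLeft K (xg K d i)).restrict (L_mem K d i)

/-- The operator `f ↦ [f, x_i]` on the commutator ideal. -/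
def Dop (i : Fin d) : Module.End K (commSub K d) :=
  ((LinearMap.mulRight K (xg K d i)) - (LinearMap.mulLeft K (xg K d i))).restrict (D_mem K d i)

lemma Lop_apply (i : Fin d) (w : commSub K d) :
    ((Lop K d i w : commSub K d) : FreeMetab K d) = xg K d i * (w : FreeMetab K d) := rfl

lemma Dop_apply (i : Fin d) (w : commSub K d) :
    ((Dop K d i w : commSub K d) : FreeMetab K d)
      = (w : FreeMetab K d) * xg K d i - xg K d i * (w : FreeMetab K d) := rfl

/-- The generators of the action. -/
def eop : Fin d ⊕ Fin d → Module.End K (commSub K d) := Sum.elim (Lop K d) (Dop K d)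

lemma eop_comm : ∀ a ∈ Set.range (eop K d), ∀ b ∈ Set.range (eop K d), a * b = b * a := by
  rintro _ ⟨s, rfl⟩ _ ⟨t, rfl⟩
  have key : ∀ s t : Fin d ⊕ Fin d, ∀ w : commSub K d,
      ((eop K d s * eop K d t) w : FreeMetab K d) = ((eop K d t * eop K d s) w : FreeMetab K d) := by
    rintro (i | i) (j | j) w <;>
      simp only [eop, Sum.elim_inl, Sum.elim_inr, Module.End.mul_apply, Lop_apply, Dop_apply]
    · exact id1 w.2 i j
    · -- L_i D_j = D_j L_i
      have h1 := comm_mul_mem K d (xg K d i) (xg K d j) w.2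
      have e1 : xg K d i * ((w : FreeMetab K d) * xg K d j - xg K d j * (w : FreeMetab K d))
          - ((xg K d i * (w : FreeMetab K d)) * xg K d j - xg K d j * (xg K d i * (w : FreeMetab K d)))
          = -((xg K d i * xg K d j - xg K d j * xg K d i) * (w : FreeMetab K d)) := by (simp only [mul_sub, sub_mul, mul_assoc]; try abel)
      rw [h1, neg_zero] at e1
      exact sub_eq_zero.mp e1
    · have h1 := comm_mul_mem K d (xg K d j) (xg K d i) w.2
      have e1 : ((xg K d j * (w : FreeMetab K d)) * xg K d i - xg K d i * (xg K d j * (w : FreeMetab K d)))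
          - xg K d j * ((w : FreeMetab K d) * xg K d i - xg K d i * (w : FreeMetab K d))
          = (xg K d j * xg K d i - xg K d i * xg K d j) * (w : FreeMetab K d) := by (simp only [mul_sub, sub_mul, mul_assoc]; try abel)
      rw [h1] at e1
      exact sub_eq_zero.mp e1
    · exact id2 w.2 j i
  exact LinearMap.ext fun w => Subtype.ext (key s t w)

end MetabAux

set_option synthInstance.maxHeartbeats 1000000 in
open MetabAux in
/-- For `f` in the commutator ideal `F_d'` and all `i, j`:
(1) `x_i(x_j f) = x_j(x_i f)`; (2) `[[f,x_i],x_j] = [[f,x_j],x_i]`;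
(3) `[x_i f, x_j] = x_i [f,x_j]`.  Consequently the prescriptions
`f·u_i = x_i f`, `f·v_i = [f,x_i]` define a `K[U_d,V_d]`-module structure on `F_d'`,
i.e. there is a `K`-algebra homomorphism `ρ : K[U_d,V_d] → End_K(F_d')` with
`ρ(u_i) f = x_i f` and `ρ(v_i) f = [f,x_i]`. -/
theorem module_structure_on_commutator_ideal
    (K : Type*) [Field K] [CharZero K] (d : ℕ) (hd : 2 ≤ d) :
    (∀ f ∈ commIdeal K d, ∀ i j : Fin d,
        xg K d i * (xg K d j * f) = xg K d j * (xg K d i * f) ∧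
        ((f * xg K d i - xg K d i * f) * xg K d j - xg K d j * (f * xg K d i - xg K d i * f))
          = ((f * xg K d j - xg K d j * f) * xg K d i
              - xg K d i * (f * xg K d j - xg K d j * f)) ∧
        ((xg K d i * f) * xg K d j - xg K d j * (xg K d i * f))
          = xg K d i * (f * xg K d j - xg K d j * f)) ∧
      ∃ ρ : PolyUV K d →ₐ[K] Module.End K (commSub K d),
        (∀ i : Fin d, ∀ f : commSub K d, (ρ (uP K d i) f : FreeMetab K d) = xg K d i * f) ∧
        (∀ i : Fin d, ∀ f : commSub K d,
          (ρ (vP K d i) f : FreeMetab K d) = (f : FreeMetab K d) * xg K d i - xg K d i * f) := by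
  constructor
  · intro f hf i j
    exact ⟨id1 hf i j, id2 hf i j, id3 hf i j⟩
  · letI : Ring (Module.End K (commSub K d)) :=
      @Module.End.instRing K (commSub K d) _ (Submodule.addCommGroup _) _
    letI : CommRing (Algebra.adjoin K (Set.range (eop K d))) :=
      Algebra.adjoinCommRingOfComm K (eop_comm K d)
    let ρ0 : PolyUV K d →ₐ[K] Algebra.adjoin K (Set.range (eop K d)) :=
      MvPolynomial.aeval fun s =>
        (⟨eop K d s, Algebra.subset_adjoin (Set.mem_range_self s)⟩ :
          Algebra.adjoin K (Set.range (eop K d)))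
    refine ⟨((Algebra.adjoin K (Set.range (eop K d))).val).comp ρ0, ?_, ?_⟩
    · intro i f
      have : (((Algebra.adjoin K (Set.range (eop K d))).val).comp ρ0) (uP K d i)
          = eop K d (Sum.inl i) := by
        simp [ρ0, uP, MvPolynomial.aeval_X]
      rw [this]
      exact Lop_apply K d i f
    · intro i f
      have : (((Algebra.adjoin K (Set.range (eop K d))).val).comp ρ0) (vP K d i)
          = eop K d (Sum.inr i) := by
        simp [ρ0, vP, MvPolynomial.aeval_X]
      rw [this]
      exact Dop_apply K d i f
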